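/- An arrangement of at most 6 distinct lines in P²(ℂ) is of class C_{≤2}: there exist two lines H, H' in the arrangement such that every multiple point lies on H ∪ H'. -/

import Mathlib

/-- The multiple points of a family of lines: points lying on at least three
of the lines. -/
def multSet {P : Type*} (L : Set (Set P)) : Set P :=
  {p | 3 ≤ {l | l ∈ L ∧ p ∈ l}.ncard}

/-- A projective line in `ℙ²(ℂ)`: the zero set of a nonzero linear form. -/
def IsProjLine (l : Set (Projectivization ℂ (Fin 3 → ℂ))) : Prop :=
  ∃ f : (Fin 3 → ℂ) →ₗ[ℂ] ℂ, f ≠ 0 ∧ l = {p | f p.rep = 0}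

open Projectivization

/-- Two distinct points lie on at most one projective line. -/
lemma proj_line_unique {l₁ l₂ : Set (Projectivization ℂ (Fin 3 → ℂ))}
    (h1 : IsProjLine l₁) (h2 : IsProjLine l₂)
    {p q : Projectivization ℂ (Fin 3 → ℂ)} (hpq : p ≠ q)
    (hp1 : p ∈ l₁) (hq1 : q ∈ l₁) (hp2 : p ∈ l₂) (hq2 : q ∈ l₂) : l₁ = l₂ := by
  obtain ⟨f, hf, rfl⟩ := h1
  obtain ⟨g, hg, rfl⟩ := h2
  have hli : LinearIndependent ℂ ![p.rep, q.rep] := by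
    rw [LinearIndependent.pair_iff' p.rep_nonzero]
    intro a ha
    apply hpq
    have : Projectivization.mk ℂ q.rep q.rep_nonzero
        = Projectivization.mk ℂ p.rep p.rep_nonzero :=
      (mk_eq_mk_iff' ℂ _ _ _ _).2 ⟨a, ha⟩
    rw [p.mk_rep, q.mk_rep] at this
    exact this.symm
  set W : Submodule ℂ (Fin 3 → ℂ) := Submodule.span ℂ (Set.range ![p.rep, q.rep]) with hW
  have hWrank : Module.finrank ℂ W = 2 := by
    rw [hW, finrank_span_eq_card hli]
    simp
  have key : ∀ h : (Fin 3 → ℂ) →ₗ[ℂ] ℂ, h ≠ 0 → h p.rep = 0 → h q.rep = 0 →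
      LinearMap.ker h = W := by
    intro h hne hp hq
    have hle : W ≤ LinearMap.ker h := by
      rw [hW, Submodule.span_le]
      rintro x ⟨i, rfl⟩
      fin_cases i <;> simpa [LinearMap.mem_ker]
    have h3 : Module.finrank ℂ (Fin 3 → ℂ) = 3 := by
      simp [Module.finrank_pi]
    have hr1 : Module.finrank ℂ (LinearMap.range h) = 1 := by
      have hle1 : Module.finrank ℂ (LinearMap.range h) ≤ 1 := by
        simpa using Submodule.finrank_le (LinearMap.range h)
      have hne0 : Module.finrank ℂ (LinearMap.range h) ≠ 0 := by
        rw [Ne, Submodule.finrank_eq_zero]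
        simpa [LinearMap.range_eq_bot] using hne
      omega
    have hker : Module.finrank ℂ (LinearMap.ker h) = 2 := by
      have := LinearMap.finrank_range_add_finrank_ker h
      rw [h3, hr1] at this
      omega
    exact (Submodule.eq_of_le_of_finrank_eq hle (by rw [hWrank, hker])).symm
  have hkf := key f hf hp1 hq1
  have hkg := key g hg hp2 hq2
  ext x
  simp only [Set.mem_setOf_eq, ← LinearMap.mem_ker, hkf, hkg]

/-- An arrangement of at most 5 lines has all its multiple points on one of its lines. -/
lemma five_lines_on_one_line {A : Set (Set (Projectivization ℂ (Fin 3 → ℂ)))}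
    (hA : A.Finite) (hcard : A.ncard ≤ 5) (hline : ∀ l ∈ A, IsProjLine l)
    (hne : A.Nonempty) : ∃ H ∈ A, multSet A ⊆ H := by
  set S : Projectivization ℂ (Fin 3 → ℂ) → Set (Set (Projectivization ℂ (Fin 3 → ℂ))) :=
    fun p => {l | l ∈ A ∧ p ∈ l} with hS
  have hSsub : ∀ p, S p ⊆ A := fun p l hl => hl.1
  have hSfin : ∀ p, (S p).Finite := fun p => hA.subset (hSsub p)
  have hsub : ∀ p q : Projectivization ℂ (Fin 3 → ℂ), p ≠ q →
      (S p ∩ S q).Subsingleton := by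
    intro p q hpq l₁ hl₁ l₂ hl₂
    exact proj_line_unique (hline l₁ hl₁.1.1) (hline l₂ hl₂.1.1) hpq
      hl₁.1.2 hl₁.2.2 hl₂.1.2 hl₂.2.2
  by_cases hex : ∃ p ∈ multSet A, ∃ q ∈ multSet A, p ≠ q
  · obtain ⟨p, hp, q, hq, hpq⟩ := hex
    have hp3 : 3 ≤ (S p).ncard := hp
    have hq3 : 3 ≤ (S q).ncard := hq
    have hint : (S p ∩ S q).ncard ≤ 1 := (Set.ncard_le_one_iff ((hSfin p).inter_of_left _)).2 (fun ha hb => hsub p q hpq ha hb)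
    have hsum := Set.ncard_union_add_ncard_inter (S p) (S q) (hSfin p) (hSfin q)
    have hUA : (S p ∪ S q).ncard ≤ A.ncard :=
      Set.ncard_le_ncard (Set.union_subset (hSsub p) (hSsub q)) hA
    have hintne : (S p ∩ S q).Nonempty := by
      apply Set.nonempty_of_ncard_ne_zero
      omega
    obtain ⟨L, hLp, hLq⟩ := hintne
    have hUeq : S p ∪ S q = A := by
      apply Set.eq_of_subset_of_ncard_le (Set.union_subset (hSsub p) (hSsub q)) _ hA
      omega
    refine ⟨L, hLp.1, fun r hr => ?_⟩
    by_cases hrp : r = p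
    · exact hrp ▸ hLp.2
    by_cases hrq : r = q
    · exact hrq ▸ hLq.2
    exfalso
    have hr3 : 3 ≤ (S r).ncard := hr
    have hSr : S r = (S r ∩ S p) ∪ (S r ∩ S q) := by
      rw [← Set.inter_union_distrib_left, hUeq]
      exact (Set.inter_eq_left.2 (hSsub r)).symm
    have h1 : (S r ∩ S p).ncard ≤ 1 := (Set.ncard_le_one_iff ((hSfin r).inter_of_left _)).2 (fun ha hb => hsub r p hrp ha hb)
    have h2 : (S r ∩ S q).ncard ≤ 1 := (Set.ncard_le_one_iff ((hSfin r).inter_of_left _)).2 (fun ha hb => hsub r q hrq ha hb)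
    have := Set.ncard_union_le (S r ∩ S p) (S r ∩ S q)
    rw [← hSr] at this
    omega
  · push_neg at hex
    by_cases hm : (multSet A).Nonempty
    · obtain ⟨p, hp⟩ := hm
      have hp3 : 3 ≤ (S p).ncard := hp
      have : (S p).Nonempty := Set.nonempty_of_ncard_ne_zero (by omega)
      obtain ⟨L, hL⟩ := this
      refine ⟨L, hL.1, fun r hr => ?_⟩
      rw [hex r hr p hp]
      exact hL.2
    · obtain ⟨H, hH⟩ := hne
      refine ⟨H, hH, ?_⟩
      rw [Set.not_nonempty_iff_eq_empty.1 hm]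
      exact Set.empty_subset _

/-- An arrangement of at most 6 distinct lines in `ℙ²(ℂ)` is of class
`C_{≤2}`: all its multiple points lie on the union of two of its lines. -/
theorem le_six_lines_class_C2
    (A : Set (Set (Projectivization ℂ (Fin 3 → ℂ))))
    (hA : A.Finite) (hcard : A.ncard ≤ 6) (hline : ∀ l ∈ A, IsProjLine l)
    (hne : A.Nonempty) :
    ∃ H ∈ A, ∃ H' ∈ A, multSet A ⊆ H ∪ H' := by
  obtain ⟨H, hH⟩ := hne
  set B := A \ {H} with hB
  by_cases hBne : B.Nonempty
  · have hBfin : B.Finite := hA.diff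
    have hBcard : B.ncard ≤ 5 := by
      have := Set.ncard_diff_singleton_of_mem hH
      rw [← hB] at this
      omega
    obtain ⟨H', hH'B, hcover⟩ := five_lines_on_one_line hBfin hBcard
      (fun l hl => hline l hl.1) hBne
    refine ⟨H, hH, H', hH'B.1, fun p hp => ?_⟩
    by_cases hpH : p ∈ H
    · exact Or.inl hpH
    · refine Or.inr (hcover ?_)
      have hEq : {l | l ∈ B ∧ p ∈ l} = {l | l ∈ A ∧ p ∈ l} := by
        ext l
        constructor
        · rintro ⟨⟨hlA, _⟩, hpl⟩; exact ⟨hlA, hpl⟩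
        · rintro ⟨hlA, hpl⟩
          refine ⟨⟨hlA, ?_⟩, hpl⟩
          rintro rfl
          exact hpH hpl
      show 3 ≤ {l | l ∈ B ∧ p ∈ l}.ncard
      rw [hEq]
      exact hp
  · have hAeq : A = {H} := by
      rw [Set.not_nonempty_iff_eq_empty, Set.diff_eq_empty] at hBne
      exact Set.Subset.antisymm hBne (Set.singleton_subset_iff.2 hH)
    refine ⟨H, hH, H, hH, fun p hp => ?_⟩
    exfalso
    have hp3 : 3 ≤ {l | l ∈ A ∧ p ∈ l}.ncard := hp
    have : {l | l ∈ A ∧ p ∈ l}.ncard ≤ ({H} : Set _).ncard :=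
      Set.ncard_le_ncard (fun l hl => hAeq ▸ hl.1) (Set.finite_singleton H)
    simp [Set.ncard_singleton] at this
    omega
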